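/- Let n ≥ 4 and let λ₁ = λ₂ > |λ₃| > 0 be real numbers (the three-dimensional symmetric top case). Then a matrix K in SO(n−1) satisfies ∃ Q ∈ SO(3) with Q Λ Kᵀ = Λ if and only if K is block diagonal of the form K = diag(S, det S, B), where S is a 2 × 2 real orthogonal matrix occupying the upper-left 2 × 2 block, the (3,3) entry equals det S, and B ∈ SO(n−4) occupies the lower-right (n−4) × (n−4) block (all off-diagonal blocks zero). -/

import Mathlib

/-- The `3 × (n-1)` matrix `Λ` with `Λ₁₁ = λ₁`, `Λ₂₂ = λ₂`, `Λ₃₃ = λ₃` and all other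
entries zero. -/
def Lam (n : ℕ) (l1 l2 l3 : ℝ) : Matrix (Fin 3) (Fin (n - 1)) ℝ :=
  Matrix.of fun i j => if (j : ℕ) = (i : ℕ) then ![l1, l2, l3] i else 0

/-- The `n × n` block diagonal matrix `diag(A, B)` built from an `a × a` block `A` and a
`b × b` block `B`, where `a + b = n`. -/
def embedBlocks {a b n : ℕ} (h : a + b = n) (A : Matrix (Fin a) (Fin a) ℝ)
    (B : Matrix (Fin b) (Fin b) ℝ) : Matrix (Fin n) (Fin n) ℝ :=
  Matrix.reindex (finSumFinEquiv.trans (finCongr h)) (finSumFinEquiv.trans (finCongr h))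
    (Matrix.fromBlocks A 0 0 B)

lemma embed_symm {a b n : ℕ} (h : a + b = n) (i : Fin n) :
    (finSumFinEquiv.trans (finCongr h)).symm i =
      if hi : (i : ℕ) < a then Sum.inl ⟨i, hi⟩ else Sum.inr ⟨(i : ℕ) - a, by omega⟩ := by
  rw [Equiv.symm_apply_eq]
  split_ifs with hi <;> ext <;> simp [finCongr, Fin.natAdd] <;> omega

lemma embed_apply {a b n : ℕ} (h : a + b = n) (A : Matrix (Fin a) (Fin a) ℝ)
    (B : Matrix (Fin b) (Fin b) ℝ) (i j : Fin n) :
    embedBlocks h A B i j =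
      if hi : (i : ℕ) < a then
        (if hj : (j : ℕ) < a then A ⟨i, hi⟩ ⟨j, hj⟩ else 0)
      else
        (if hj : (j : ℕ) < a then 0 else B ⟨(i : ℕ) - a, by omega⟩ ⟨(j : ℕ) - a, by omega⟩) := by
  simp only [embedBlocks, Matrix.reindex_apply, Matrix.submatrix_apply, embed_symm]
  split_ifs with hi hj hj <;> simp [Matrix.fromBlocks]

lemma sum_split {a b m : ℕ} (h : a + b = m) (f : Fin m → ℝ) :
    ∑ r, f r = (∑ i : Fin a, f ⟨i, by omega⟩) + ∑ p : Fin b, f ⟨a + p, by omega⟩ := by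
  rw [← Fintype.sum_equiv (finCongr h) (fun r => f (finCongr h r)) f (fun _ => rfl),
    Fin.sum_univ_add]
  rfl

lemma fin3_mk0 : ∀ (h : (0:ℕ) < 3), (⟨0, h⟩ : Fin 3) = 0 := fun _ => rfl
lemma fin3_mk1 : ∀ (h : (1:ℕ) < 3), (⟨1, h⟩ : Fin 3) = 1 := fun _ => rfl
lemma fin3_mk2 : ∀ (h : (2:ℕ) < 3), (⟨2, h⟩ : Fin 3) = 2 := fun _ => rfl
lemma fin2_mk0 : ∀ (h : (0:ℕ) < 2), (⟨0, h⟩ : Fin 2) = 0 := fun _ => rfl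
lemma fin2_mk1 : ∀ (h : (1:ℕ) < 2), (⟨1, h⟩ : Fin 2) = 1 := fun _ => rfl

lemma lamK_apply {n : ℕ} (hn : 4 ≤ n) (l1 l2 l3 : ℝ)
    (X : Matrix (Fin (n - 1)) (Fin (n - 1)) ℝ) (i : Fin 3) (j : Fin (n - 1)) :
    (Lam n l1 l2 l3 * X.transpose) i j = ![l1, l2, l3] i * X j ⟨(i : ℕ), by omega⟩ := by
  rw [Matrix.mul_apply]
  rw [Fintype.sum_eq_single (⟨(i : ℕ), by omega⟩ : Fin (n - 1))]
  · simp [Lam]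
  · intro k hk
    have hki : (k : ℕ) ≠ (i : ℕ) := fun h => hk (Fin.ext h)
    simp [Lam, hki]

lemma QtLam_apply {n : ℕ} (hn : 4 ≤ n) (l1 l2 l3 : ℝ)
    (Q : Matrix (Fin 3) (Fin 3) ℝ) (i : Fin 3) (j : Fin (n - 1)) :
    (Q.transpose * Lam n l1 l2 l3) i j =
      if hj : (j : ℕ) < 3 then Q ⟨(j : ℕ), hj⟩ i * ![l1, l2, l3] ⟨(j : ℕ), hj⟩ else 0 := by
  rw [Matrix.mul_apply, Fin.sum_univ_three]
  split_ifs with hj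
  · have : (j : ℕ) = 0 ∨ (j : ℕ) = 1 ∨ (j : ℕ) = 2 := by omega
    rcases this with h | h | h <;> simp [Lam, h, Fin.ext_iff]
  · have h0 : (j : ℕ) ≠ 0 := by omega
    have h1 : (j : ℕ) ≠ 1 := by omega
    have h2 : (j : ℕ) ≠ 2 := by omega
    simp [Lam, h0, h1, h2]

set_option maxHeartbeats 1000000 in
/-- Three-dimensional symmetric top case: for `n ≥ 4` and `λ₁ = λ₂ > |λ₃| > 0`, a matrix
`K ∈ SO(n-1)` satisfies `∃ Q ∈ SO(3), Q Λ Kᵀ = Λ` iff `K = diag(S, det S, B)` with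
`S ∈ O(2)` and `B ∈ SO(n-4)`. -/
theorem stmt_6 (n : ℕ) (hn : 4 ≤ n) (l1 l2 l3 : ℝ)
    (h12 : l1 = l2) (h23 : |l3| < l2) (h3 : 0 < |l3|)
    (K : Matrix (Fin (n - 1)) (Fin (n - 1)) ℝ)
    (hK : K.transpose * K = 1 ∧ K.det = 1) :
    (∃ Q : Matrix (Fin 3) (Fin 3) ℝ,
        (Q.transpose * Q = 1 ∧ Q.det = 1) ∧
        Q * Lam n l1 l2 l3 * K.transpose = Lam n l1 l2 l3) ↔
      ∃ (S : Matrix (Fin 2) (Fin 2) ℝ) (B : Matrix (Fin (n - 4)) (Fin (n - 4)) ℝ),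
        S.transpose * S = 1 ∧
        (B.transpose * B = 1 ∧ B.det = 1) ∧
        K = embedBlocks (by omega : 3 + (n - 4) = n - 1)
              (embedBlocks (by norm_num : 2 + 1 = 3) S
                (Matrix.of fun _ _ => S.det : Matrix (Fin 1) (Fin 1) ℝ)) B := by
  obtain ⟨hK1, hKdet⟩ := hK
  subst h12
  have hl1 : 0 < l1 := lt_of_le_of_lt (abs_nonneg l3) h23
  have hl1' : l1 ≠ 0 := ne_of_gt hl1
  have hl3 : l3 ≠ 0 := by simpa [abs_pos] using h3
  have hne : l3 ^ 2 ≠ l1 ^ 2 := by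
    have h1 : l3 ^ 2 < l1 ^ 2 := by nlinarith [sq_abs l3, abs_nonneg l3]
    linarith
  have hsplit : 3 + (n - 4) = n - 1 := by omega
  set L := Lam n l1 l1 l3 with hLdef
  constructor
  · rintro ⟨Q, ⟨hQ1, hQdet⟩, hQL⟩
    have hQQt : Q * Q.transpose = 1 := mul_eq_one_comm.mp hQ1
    have hKKt : K * K.transpose = 1 := mul_eq_one_comm.mp hK1
    -- Step 1 : Q is block diagonal
    have hM : ∀ i i' : Fin 3, (L * L.transpose) i i' =
        if i = i' then (![l1, l1, l3] i) ^ 2 else 0 := by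
      intro i i'
      rw [Matrix.mul_apply]
      rw [Fintype.sum_eq_single (⟨(i : ℕ), by omega⟩ : Fin (n - 1))]
      · by_cases h : i = i'
        · subst h; simp [hLdef, Lam, sq]
        · have : (i : ℕ) ≠ (i' : ℕ) := fun hh => h (Fin.ext hh)
          simp [hLdef, Lam, h, this]
      · intro k hk
        have hki : (k : ℕ) ≠ (i : ℕ) := fun h => hk (Fin.ext h)
        simp [hLdef, Lam, hki]
    have e2 : Q * (L * L.transpose) * Q.transpose = L * L.transpose := by
      have e1 : (Q * L * K.transpose) * (Q * L * K.transpose).transpose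
          = L * L.transpose := by rw [hQL]
      calc Q * (L * L.transpose) * Q.transpose
          = Q * L * (K.transpose * K) * (L.transpose * Q.transpose) := by
            rw [hK1]; simp [Matrix.mul_assoc]
        _ = (Q * L * K.transpose) * (Q * L * K.transpose).transpose := by
            simp [Matrix.transpose_mul, Matrix.mul_assoc]
        _ = L * L.transpose := e1
    have hcomm : Q * (L * L.transpose) = (L * L.transpose) * Q := by
      have e3 := congrArg (· * Q) e2
      simpa [Matrix.mul_assoc, hQ1] using e3
    have hQent : ∀ i i' : Fin 3,
        Q i i' * (![l1, l1, l3] i') ^ 2 = (![l1, l1, l3] i) ^ 2 * Q i i' := by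
      intro i i'
      have h := congrFun (congrFun hcomm i) i'
      rw [Matrix.mul_apply, Matrix.mul_apply, Fin.sum_univ_three, Fin.sum_univ_three,
        hM, hM, hM, hM, hM, hM] at h
      fin_cases i <;> fin_cases i' <;> simpa using h
    have key : ∀ i : Fin 3, i ≠ 2 → Q i 2 = 0 ∧ Q 2 i = 0 := by
      intro i hi
      have hv : (![l1, l1, l3] i) ^ 2 = l1 ^ 2 := by
        fin_cases i <;> first | exact absurd rfl hi | simp
      constructor
      · have h := hQent i 2
        rw [hv] at h
        have h' : Q i 2 * (l3 ^ 2 - l1 ^ 2) = 0 := by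
          simp at h; linear_combination h
        rcases mul_eq_zero.mp h' with h'' | h''
        · exact h''
        · exact absurd (by linarith : l3 ^ 2 = l1 ^ 2) hne
      · have h := hQent 2 i
        rw [hv] at h
        have h' : Q 2 i * (l1 ^ 2 - l3 ^ 2) = 0 := by
          simp at h; linear_combination h
        rcases mul_eq_zero.mp h' with h'' | h''
        · exact h''
        · exact absurd (by linarith : l3 ^ 2 = l1 ^ 2) hne
    obtain ⟨hQ02, hQ20⟩ := key 0 (by decide)
    obtain ⟨hQ12, hQ21⟩ := key 1 (by decide)
    -- Step 2 : entrywise consequences of Q L Kᵀ = L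
    have hA : L * K.transpose = Q.transpose * L := by
      have h := congrArg (fun M => Q.transpose * M) hQL
      simpa [← Matrix.mul_assoc, hQ1] using h
    have hE : ∀ (i : Fin 3) (j : Fin (n - 1)),
        ![l1, l1, l3] i * K j ⟨(i : ℕ), by omega⟩ =
          if hj : (j : ℕ) < 3 then Q ⟨(j : ℕ), hj⟩ i * ![l1, l1, l3] ⟨(j : ℕ), hj⟩ else 0 := by
      intro i j
      rw [← lamK_apply hn l1 l1 l3 K i j, hLdef] at *
      rw [hA, QtLam_apply hn]
    -- nonzeroness of the lambda vector
    have hvne : ∀ i : Fin 3, ![l1, l1, l3] i ≠ 0 := by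
      intro i; fin_cases i <;> simp [hl1', hl3]
    -- the top-left 3×3 block of K equals Q
    have hKtop : ∀ (r c : Fin 3) (h1 : (r : ℕ) < n - 1) (h2 : (c : ℕ) < n - 1),
        K ⟨(r : ℕ), h1⟩ ⟨(c : ℕ), h2⟩ = Q r c := by
      intro r c h1 h2
      have h := hE c ⟨(r : ℕ), h1⟩
      rw [dif_pos (show ((⟨(r : ℕ), h1⟩ : Fin (n - 1)) : ℕ) < 3 from r.isLt)] at h
      have hr : (⟨((⟨(r : ℕ), h1⟩ : Fin (n - 1)) : ℕ), r.isLt⟩ : Fin 3) = r := rfl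
      rw [hr] at h
      fin_cases r <;> fin_cases c <;>
        simp only [fin3_mk0, fin3_mk1, fin3_mk2, Matrix.cons_val_zero, Matrix.cons_val_one,
          Matrix.head_cons, Matrix.cons_val_two, Matrix.tail_cons] at h <;>
        first
          | exact mul_left_cancel₀ hl1' (h.trans (mul_comm _ _))
          | exact mul_left_cancel₀ hl3 (h.trans (mul_comm _ _))
          | (simp only [fin3_mk0, fin3_mk1, fin3_mk2, hQ02, hQ12, hQ20, hQ21, zero_mul,
               mul_eq_zero] at h ⊢;
             exact h.resolve_left hl3)
          | (simp only [fin3_mk0, fin3_mk1, fin3_mk2, hQ02, hQ12, hQ20, hQ21, zero_mul,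
               mul_eq_zero] at h ⊢;
             exact h.resolve_left hl1')
    -- rows of K are orthonormal; K vanishes on the top-right block
    have hup : ∀ (r : Fin 3) (c : Fin (n - 1)), 3 ≤ (c : ℕ) → K ⟨(r : ℕ), by omega⟩ c = 0 := by
      intro r c hc
      have hd := congrFun (congrFun hKKt ⟨(r : ℕ), by omega⟩) ⟨(r : ℕ), by omega⟩
      rw [Matrix.mul_apply, sum_split hsplit] at hd
      simp only [Matrix.transpose_apply, hKtop, Matrix.one_apply_eq] at hd
      have hQrow : ∑ i : Fin 3, Q r i * Q r i = 1 := by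
        have h := congrFun (congrFun hQQt r) r
        rw [Matrix.mul_apply] at h
        simpa [Matrix.transpose_apply] using h
      rw [hQrow] at hd
      have hz : ∑ p : Fin (n - 4), K ⟨(r : ℕ), by omega⟩ ⟨3 + (p : ℕ), by omega⟩ *
          K ⟨(r : ℕ), by omega⟩ ⟨3 + (p : ℕ), by omega⟩ = 0 := by linarith [hd]
      have ht := (Finset.sum_eq_zero_iff_of_nonneg
        (fun p _ => mul_self_nonneg _)).mp hz ⟨(c : ℕ) - 3, by omega⟩ (Finset.mem_univ _)
      have hcc : (⟨3 + ((⟨(c : ℕ) - 3, by omega⟩ : Fin (n - 4)) : ℕ), by omega⟩ : Fin (n - 1))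
          = c := by ext; simp; omega
      rw [hcc] at ht
      exact mul_self_eq_zero.mp ht
    have hup' : ∀ (i : Fin 3) (h : (i : ℕ) < n - 1) (p : Fin (n - 4))
        (h2 : 3 + (p : ℕ) < n - 1), K ⟨(i : ℕ), h⟩ ⟨3 + (p : ℕ), h2⟩ = 0 :=
      fun i h p h2 => hup i ⟨3 + (p : ℕ), h2⟩ (Nat.le_add_right 3 (p : ℕ))
    -- K vanishes on the bottom-left block
    have hlow : ∀ (c : Fin 3) (h2 : (c : ℕ) < n - 1) (j : Fin (n - 1)), 3 ≤ (j : ℕ) →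
        K j ⟨(c : ℕ), h2⟩ = 0 := by
      intro c h2 j hj
      have h := hE c j
      rw [dif_neg (by omega)] at h
      exact (mul_eq_zero.mp h).resolve_left (hvne c)
    -- the candidate blocks
    set S : Matrix (Fin 2) (Fin 2) ℝ :=
      Matrix.of fun p q => Q ⟨(p : ℕ), by omega⟩ ⟨(q : ℕ), by omega⟩ with hSdef
    set B : Matrix (Fin (n - 4)) (Fin (n - 4)) ℝ :=
      Matrix.of fun p q => K ⟨3 + (p : ℕ), by omega⟩ ⟨3 + (q : ℕ), by omega⟩ with hBdef
    have h22 : Q 2 2 * Q 2 2 = 1 := by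
      have h := congrFun (congrFun hQ1 2) 2
      rw [Matrix.mul_apply, Fin.sum_univ_three] at h
      simpa [Matrix.transpose_apply, hQ02, hQ12, Matrix.one_apply] using h
    have hS : S.transpose * S = 1 := by
      ext p q
      have h := congrFun (congrFun hQ1 ⟨(p : ℕ), by omega⟩) ⟨(q : ℕ), by omega⟩
      rw [Matrix.mul_apply, Fin.sum_univ_three] at h
      rw [Matrix.mul_apply, Fin.sum_univ_two]
      simp only [Matrix.transpose_apply, hSdef, Matrix.of_apply] at h ⊢
      fin_cases p <;> fin_cases q <;>
        simp only [Fin.val_zero, Fin.val_one, Fin.isValue, fin3_mk0, fin3_mk1, fin2_mk0,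
          fin2_mk1, hQ20, hQ21, mul_zero, add_zero] at h ⊢ <;>
        simp only [Matrix.one_apply, Fin.ext_iff] at h ⊢ <;> norm_num at h ⊢ <;> linarith [h]
    have hdetS : S.det = Q 2 2 := by
      have hdq := hQdet
      rw [Matrix.det_fin_three] at hdq
      rw [Matrix.det_fin_two]
      simp only [hSdef, Matrix.of_apply, fin3_mk0, fin3_mk1, Fin.val_zero, Fin.val_one,
        Fin.isValue]
      simp only [hQ02, hQ12, hQ20, hQ21, mul_zero, zero_mul, add_zero, sub_zero,
        zero_add] at hdq
      linear_combination Q 2 2 * hdq - (Q 0 0 * Q 1 1 - Q 0 1 * Q 1 0) * h22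
    have hB1 : B.transpose * B = 1 := by
      ext q q'
      have h := congrFun (congrFun hK1 ⟨3 + (q : ℕ), by omega⟩) ⟨3 + (q' : ℕ), by omega⟩
      rw [Matrix.mul_apply, sum_split hsplit] at h
      simp only [Matrix.transpose_apply, hup', zero_mul, mul_zero, Finset.sum_const_zero,
        zero_add] at h
      rw [Matrix.mul_apply]
      simp only [Matrix.transpose_apply, hBdef, Matrix.of_apply]
      have hone : (1 : Matrix (Fin (n - 1)) (Fin (n - 1)) ℝ)
          ⟨3 + (q : ℕ), by omega⟩ ⟨3 + (q' : ℕ), by omega⟩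
          = (1 : Matrix (Fin (n - 4)) (Fin (n - 4)) ℝ) q q' := by
        by_cases hqq : q = q'
        · subst hqq; simp
        · have : (q : ℕ) ≠ (q' : ℕ) := fun hh => hqq (Fin.ext hh)
          rw [Matrix.one_apply_ne (by simp [Fin.ext_iff]; omega),
            Matrix.one_apply_ne hqq]
      exact h.trans hone
    have hKeq : K = embedBlocks (by omega : 3 + (n - 4) = n - 1)
        (embedBlocks (by norm_num : 2 + 1 = 3) S
          (Matrix.of fun _ _ => S.det : Matrix (Fin 1) (Fin 1) ℝ)) B := by
      ext i j
      obtain ⟨iv, hivlt⟩ := i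
      obtain ⟨jv, hjvlt⟩ := j
      rw [embed_apply]
      by_cases hi3 : iv < 3
      · rw [dif_pos hi3]
        by_cases hj3 : jv < 3
        · rw [dif_pos hj3, embed_apply]
          interval_cases iv <;> interval_cases jv <;>
            simp only [Fin.isValue, fin2_mk0, fin2_mk1] <;>
            norm_num <;>
            (try simp only [hSdef, Matrix.of_apply, fin2_mk0, fin2_mk1, fin3_mk0, fin3_mk1,
              Fin.val_zero, Fin.val_one, Fin.isValue]) <;>
            first
              | exact hKtop 0 0 (by omega) (by omega)
              | exact hKtop 0 1 (by omega) (by omega)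
              | exact hKtop 1 0 (by omega) (by omega)
              | exact hKtop 1 1 (by omega) (by omega)
              | exact (hKtop 0 2 (by omega) (by omega)).trans hQ02
              | exact (hKtop 1 2 (by omega) (by omega)).trans hQ12
              | exact (hKtop 2 0 (by omega) (by omega)).trans hQ20
              | exact (hKtop 2 1 (by omega) (by omega)).trans hQ21
              | exact (hKtop 2 2 (by omega) (by omega)).trans hdetS.symm
        · rw [dif_neg hj3]
          exact hup ⟨iv, hi3⟩ ⟨jv, hjvlt⟩ (show 3 ≤ jv by omega)
      · rw [dif_neg hi3]
        by_cases hj3 : jv < 3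
        · rw [dif_pos hj3]
          exact hlow ⟨jv, hj3⟩ (by omega) ⟨iv, hivlt⟩ (show 3 ≤ iv by omega)
        · rw [dif_neg hj3]
          simp only [hBdef, Matrix.of_apply]
          have h1 : (⟨3 + ((⟨iv - 3, by omega⟩ : Fin (n - 4)) : ℕ), by omega⟩ : Fin (n - 1))
              = ⟨iv, hivlt⟩ := by ext; simp; omega
          have h2 : (⟨3 + ((⟨jv - 3, by omega⟩ : Fin (n - 4)) : ℕ), by omega⟩ : Fin (n - 1))
              = ⟨jv, hjvlt⟩ := by ext; simp; omega
          exact (congrArg₂ K h1 h2).symm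
    have hBdet : B.det = 1 := by
      have hdk := hKdet
      rw [hKeq] at hdk
      simp only [embedBlocks, Matrix.det_reindex_self, Matrix.det_fromBlocks_zero₂₁,
        Matrix.det_fin_one, Matrix.of_apply] at hdk
      rw [hdetS] at hdk
      rw [h22, one_mul] at hdk
      exact hdk
    exact ⟨S, B, hS, ⟨hB1, hBdet⟩, hKeq⟩
  · rintro ⟨S, B, hS, ⟨hB1, hBdet⟩, hKeq⟩
    have hSSt : S * S.transpose = 1 := mul_eq_one_comm.mp hS
    have detS2 : S.det * S.det = 1 := by
      have h := congrArg Matrix.det hS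
      simpa [Matrix.det_mul, Matrix.det_transpose] using h
    have r00 : S 0 0 * S 0 0 + S 0 1 * S 0 1 = 1 := by
      have h := congrFun (congrFun hSSt 0) 0
      rw [Matrix.mul_apply, Fin.sum_univ_two] at h
      simpa [Matrix.transpose_apply, Matrix.one_apply] using h
    have r01 : S 0 0 * S 1 0 + S 0 1 * S 1 1 = 0 := by
      have h := congrFun (congrFun hSSt 0) 1
      rw [Matrix.mul_apply, Fin.sum_univ_two] at h
      simpa [Matrix.transpose_apply, Matrix.one_apply] using h
    have r11 : S 1 0 * S 1 0 + S 1 1 * S 1 1 = 1 := by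
      have h := congrFun (congrFun hSSt 1) 1
      rw [Matrix.mul_apply, Fin.sum_univ_two] at h
      simpa [Matrix.transpose_apply, Matrix.one_apply] using h
    have c00 : S 0 0 * S 0 0 + S 1 0 * S 1 0 = 1 := by
      have h := congrFun (congrFun hS 0) 0
      rw [Matrix.mul_apply, Fin.sum_univ_two] at h
      simpa [Matrix.transpose_apply, Matrix.one_apply] using h
    have c01 : S 0 0 * S 0 1 + S 1 0 * S 1 1 = 0 := by
      have h := congrFun (congrFun hS 0) 1
      rw [Matrix.mul_apply, Fin.sum_univ_two] at h
      simpa [Matrix.transpose_apply, Matrix.one_apply] using h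
    have c11 : S 0 1 * S 0 1 + S 1 1 * S 1 1 = 1 := by
      have h := congrFun (congrFun hS 1) 1
      rw [Matrix.mul_apply, Fin.sum_univ_two] at h
      simpa [Matrix.transpose_apply, Matrix.one_apply] using h
    refine ⟨embedBlocks (by norm_num : 2 + 1 = 3) S
      (Matrix.of fun _ _ => S.det : Matrix (Fin 1) (Fin 1) ℝ), ⟨?_, ?_⟩, ?_⟩
    · ext i j
      rw [Matrix.mul_apply, Fin.sum_univ_three]
      simp only [Matrix.transpose_apply, embed_apply]
      fin_cases i <;> fin_cases j <;>
        norm_num [Matrix.one_apply, fin2_mk0, fin2_mk1, fin3_mk0, fin3_mk1, fin3_mk2, Fin.ext_iff] <;>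
        linarith [c00, c01, c11, detS2]
    · simp only [embedBlocks, Matrix.det_reindex_self, Matrix.det_fromBlocks_zero₂₁,
        Matrix.det_fin_one, Matrix.of_apply]
      exact detS2
    · have hKent : ∀ (a : Fin 3) (ha : (a : ℕ) < n - 1) (j : Fin (n - 1)),
          K j ⟨(a : ℕ), ha⟩ = (if hj : (j : ℕ) < 3 then
            (embedBlocks (by norm_num : 2 + 1 = 3) S
              (Matrix.of fun _ _ => S.det : Matrix (Fin 1) (Fin 1) ℝ)) ⟨(j : ℕ), hj⟩ a
            else 0) := by
        intro a ha j
        rw [hKeq, embed_apply]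
        by_cases hj : (j : ℕ) < 3
        · rw [dif_pos hj, dif_pos (show ((⟨(a : ℕ), ha⟩ : Fin (n - 1)) : ℕ) < 3 from a.isLt),
            dif_pos hj]
        · rw [dif_neg hj, dif_neg hj,
            dif_pos (show ((⟨(a : ℕ), ha⟩ : Fin (n - 1)) : ℕ) < 3 from a.isLt)]
      ext i j
      rw [hLdef, Matrix.mul_assoc, Matrix.mul_apply, Fin.sum_univ_three]
      simp only [lamK_apply hn, hKent]
      obtain ⟨jv, hjvlt⟩ := j
      by_cases hj3 : jv < 3
      · simp only [dif_pos (show ((⟨jv, hjvlt⟩ : Fin (n - 1)) : ℕ) < 3 from hj3)]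
        interval_cases jv <;> fin_cases i <;>
          simp only [embed_apply] <;>
          norm_num [Lam, fin2_mk0, fin2_mk1, fin3_mk0, fin3_mk1, fin3_mk2] <;>
          first
            | linear_combination l1 * r00
            | linear_combination l1 * r01
            | linear_combination l1 * r11
            | linear_combination l3 * detS2
            | (have hv : ![l1, l1, l3] 2 = l3 := rfl
               linear_combination (S.det ^ 2 - 1) * hv + l3 * detS2)
      · simp only [dif_neg (show ¬ ((⟨jv, hjvlt⟩ : Fin (n - 1)) : ℕ) < 3 from hj3)]
        have : jv ≠ (i : ℕ) := by have := i.isLt; omega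
        simp [Lam, this]
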